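/- Completeness of the translation for !_{t}^{c,w}MacLL: if a sequent Γ ⇒ C is derivable in !_{t}^{c,w}MacLL (MacLL plus !L, !R, C, W, cut-free), then the translated sequent τ(Γ) ⇒ τ(C) is derivable in MacLL extended with the nonlogical axioms Φ^{Γ,C}_∞ and the cut rule, where Φ^{Γ,C}_∞ = Φ^X_∞ for X the set of all subformulas occurring in Γ ⇒ C. -/
import Mathlib


/-- Multiplicative exponential formulas: variables, unit, !, ⊗, →, ←. -/
inductive Fm : Type where
  | var : Nat → Fm
  | one : Fm
  | bang : Fm → Fm
  | tens : Fm → Fm → Fm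
  | arr : Fm → Fm → Fm      -- A → B
  | larr : Fm → Fm → Fm     -- B ← A
deriving DecidableEq

/-- Structures: binary trees of formulas, allowing the empty structure. -/
inductive Str : Type where
  | emp : Str
  | leaf : Fm → Str
  | comma : Str → Str → Str
deriving DecidableEq

/-- One-hole structure contexts. -/
inductive Ctx : Type where
  | hole : Ctx
  | commaL : Ctx → Str → Ctx
  | commaR : Str → Ctx → Ctx

/-- Plug a structure into the hole of a context. -/
def Ctx.fill : Ctx → Str → Str
  | .hole, Δ => Δ
  | .commaL c Δ, P => .comma (c.fill P) Δ
  | .commaR Γ c, P => .comma Γ (c.fill P)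

/-- !Γ : bang every leaf formula of a structure. -/
def bangStr : Str → Str
  | .emp => .emp
  | .leaf A => .leaf (.bang A)
  | .comma a b => .comma (bangStr a) (bangStr b)

/-- `StarBang Γ Γ'` : Γ' is Γ with some subset of its leaf formulas banged (!*Γ). -/
inductive StarBang : Str → Str → Prop where
  | emp : StarBang .emp .emp
  | leaf (A : Fm) : StarBang (.leaf A) (.leaf A)
  | leafBang (A : Fm) : StarBang (.leaf A) (.leaf (.bang A))
  | comma {a a' b b' : Str} : StarBang a a' → StarBang b b' →
      StarBang (.comma a b) (.comma a' b')

/-- Proper structures: nonempty binary trees of formulas (no occurrence of the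
empty structure), matching the grammar Γ ::= (Γ,Γ) | F. -/
inductive Str.proper : Str → Prop where
  | leaf (A : Fm) : (Str.leaf A).proper
  | comma {a b : Str} : a.proper → b.proper → (Str.comma a b).proper

/-- Flags selecting the optional modal/structural rules of a system. -/
structure Flags where
  bangL : Bool := false
  bangR : Bool := false
  bangRK : Bool := false
  bangR4 : Bool := false
  bangRK4 : Bool := false
  contr : Bool := false     -- single-formula contraction C
  contrK : Bool := false    -- structural contraction CK
  weak : Bool := false      -- weakening W
  cut : Bool := false

/-- Sequent derivability in MacLL extended by the rules selected by `fl`,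
with nonlogical axioms `Ax`. -/
inductive Der (fl : Flags) (Ax : Set (Str × Fm)) : Str → Fm → Prop where
  | ax {Γ : Str} {C : Fm} : (Γ, C) ∈ Ax → Der fl Ax Γ C
  | init (A : Fm) : Der fl Ax (.leaf A) A
  | tensL (Γ : Ctx) {A B C : Fm} :
      Der fl Ax (Γ.fill (.comma (.leaf A) (.leaf B))) C →
      Der fl Ax (Γ.fill (.leaf (.tens A B))) C
  | tensR {Γ Δ : Str} {A B : Fm} :
      Der fl Ax Γ A → Der fl Ax Δ B → Der fl Ax (.comma Γ Δ) (.tens A B)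
  | arrL (Γ : Ctx) {Δ : Str} {A B C : Fm} :
      Der fl Ax Δ A → Der fl Ax (Γ.fill (.leaf B)) C →
      Der fl Ax (Γ.fill (.comma Δ (.leaf (.arr A B)))) C
  | arrR {Γ : Str} {A B : Fm} :
      Der fl Ax (.comma (.leaf A) Γ) B → Der fl Ax Γ (.arr A B)
  | larrL (Γ : Ctx) {Δ : Str} {A B C : Fm} :
      Der fl Ax Δ A → Der fl Ax (Γ.fill (.leaf B)) C →
      Der fl Ax (Γ.fill (.comma (.leaf (.larr B A)) Δ)) C
  | larrR {Γ : Str} {A B : Fm} :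
      Der fl Ax (.comma Γ (.leaf A)) B → Der fl Ax Γ (.larr B A)
  | oneL (Γ : Ctx) {C : Fm} :
      Der fl Ax (Γ.fill .emp) C → Der fl Ax (Γ.fill (.leaf .one)) C
  | oneR : Der fl Ax .emp .one
  | bangL (Γ : Ctx) {A C : Fm} : fl.bangL = true →
      Der fl Ax (Γ.fill (.leaf A)) C → Der fl Ax (Γ.fill (.leaf (.bang A))) C
  | bangR {A C : Fm} : fl.bangR = true →
      Der fl Ax (.leaf A) C → Der fl Ax (.leaf (.bang A)) (.bang C)
  | bangRK {Γ : Str} {C : Fm} : fl.bangRK = true →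
      Der fl Ax Γ C → Der fl Ax (bangStr Γ) (.bang C)
  | bangR4 {A C : Fm} : fl.bangR4 = true →
      Der fl Ax (.leaf (.bang A)) C → Der fl Ax (.leaf (.bang A)) (.bang C)
  | bangRK4 {Γ Γ' : Str} {C : Fm} : fl.bangRK4 = true →
      StarBang Γ Γ' → Der fl Ax Γ' C → Der fl Ax (bangStr Γ) (.bang C)
  | contr (Γ : Ctx) {A : Fm} {C : Fm} : fl.contr = true →
      Der fl Ax (Γ.fill (.comma (.leaf (.bang A)) (.leaf (.bang A)))) C →
      Der fl Ax (Γ.fill (.leaf (.bang A))) C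
  | contrK (Γ : Ctx) {Δ : Str} {C : Fm} : fl.contrK = true → Δ.proper →
      Der fl Ax (Γ.fill (.comma (bangStr Δ) (bangStr Δ))) C →
      Der fl Ax (Γ.fill (bangStr Δ)) C
  | weak (Γ : Ctx) {A C : Fm} : fl.weak = true →
      Der fl Ax (Γ.fill .emp) C → Der fl Ax (Γ.fill (.leaf (.bang A))) C
  | cut (Γ : Ctx) {Δ : Str} {A C : Fm} : fl.cut = true →
      Der fl Ax Δ A → Der fl Ax (Γ.fill (.leaf A)) C →
      Der fl Ax (Γ.fill Δ) C

/-- Plain MacLL (no modal or structural rules, no cut). -/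
def macll : Flags := {}
/-- Translation τ into !-free formulas: τ(p_i)=p_{2i+1}, τ(!A)=p_{2⌈A⌉}. -/
def tau (enc : Fm → Nat) : Fm → Fm
  | .var i => .var (2 * i + 1)
  | .one => .one
  | .bang A => .var (2 * enc A)
  | .tens A B => .tens (tau enc A) (tau enc B)
  | .arr A B => .arr (tau enc A) (tau enc B)
  | .larr A B => .larr (tau enc A) (tau enc B)

/-- Leafwise extension of τ to structures. -/
def tauStr (enc : Fm → Nat) : Str → Str
  | .emp => .emp
  | .leaf A => .leaf (tau enc A)
  | .comma a b => .comma (tauStr enc a) (tauStr enc b)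

/-- The set of propositional variables of a formula. -/
def Fm.vars : Fm → Set Nat
  | .var i => {i}
  | .one => ∅
  | .bang A => A.vars
  | .tens A B => A.vars ∪ B.vars
  | .arr A B => A.vars ∪ B.vars
  | .larr A B => A.vars ∪ B.vars

def Str.vars : Str → Set Nat
  | .emp => ∅
  | .leaf A => A.vars
  | .comma a b => a.vars ∪ b.vars

/-- Subformulas of a formula. -/
def Fm.sub : Fm → Set Fm
  | .var i => {.var i}
  | .one => {.one}
  | .bang A => insert (.bang A) A.sub
  | .tens A B => insert (.tens A B) (A.sub ∪ B.sub)
  | .arr A B => insert (.arr A B) (A.sub ∪ B.sub)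
  | .larr A B => insert (.larr A B) (A.sub ∪ B.sub)

/-- The yield of a structure: the set of formulas occurring in it. -/
def Str.fms : Str → Set Fm
  | .emp => ∅
  | .leaf A => {A}
  | .comma a b => a.fms ∪ b.fms

/-- !-free formulas. -/
def Fm.bangFree : Fm → Prop
  | .var _ => True
  | .one => True
  | .bang _ => False
  | .tens A B => A.bangFree ∧ B.bangFree
  | .arr A B => A.bangFree ∧ B.bangFree
  | .larr A B => A.bangFree ∧ B.bangFree

def Str.bangFree : Str → Prop
  | .emp => True
  | .leaf A => A.bangFree
  | .comma a b => a.bangFree ∧ b.bangFree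

/-- The flags of the cut-free system !^S_M MacLL, for S ⊆ {c,w} and M ⊆ {k,t,4}
given by Booleans c, w, k, t, f4. -/
def sysFlags (c w k t f4 : Bool) : Flags where
  bangL := t
  bangR := !k && !f4
  bangRK := k && !f4
  bangR4 := !k && f4
  bangRK4 := k && f4
  contr := c && !k
  contrK := c && k
  weak := w
  cut := false

/-- MacLL with cut (used with nonlogical axioms). -/
def macllCut : Flags := { cut := true }
/-- The axiom sets Φ^X_n (for the light system without axiom 4): Φ^X_0 contains
p_{2⌈A⌉} ⇒ τ(A), p_{2⌈A⌉} ⇒ p_{2⌈A⌉} ⊗ p_{2⌈A⌉} and p_{2⌈A⌉} ⇒ 1 for !A ∈ X;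
Φ^X_{n+1} adds p_{2⌈A⌉} ⇒ p_{2⌈B⌉} whenever MacLL+Φ^X_n proves τ(A) ⇒ τ(B). -/
def Phi (enc : Fm → Nat) (X : Set Fm) : Nat → Set (Str × Fm)
  | 0 => {s | ∃ A, Fm.bang A ∈ X ∧
      (s = (Str.leaf (Fm.var (2 * enc A)), tau enc A) ∨
       s = (Str.leaf (Fm.var (2 * enc A)),
            Fm.tens (Fm.var (2 * enc A)) (Fm.var (2 * enc A))) ∨
       s = (Str.leaf (Fm.var (2 * enc A)), Fm.one))}
  | n + 1 => Phi enc X n ∪ {s | ∃ A B, Fm.bang A ∈ X ∧ Fm.bang B ∈ X ∧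
      s = (Str.leaf (Fm.var (2 * enc A)), Fm.var (2 * enc B)) ∧
      Der macllCut (Phi enc X n) (Str.leaf (tau enc A)) (tau enc B)}

/-- !_{t}^{c,w}MacLL, cut-free: MacLL + !L + !R + C + W. -/
def sys10 : Flags := { bangL := true, bangR := true, contr := true, weak := true }

/-! ### Auxiliary machinery -/

/-- Leafwise extension of τ to contexts. -/
def tauCtx (enc : Fm → Nat) : Ctx → Ctx
  | .hole => .hole
  | .commaL c Δ => .commaL (tauCtx enc c) (tauStr enc Δ)
  | .commaR Γ c => .commaR (tauStr enc Γ) (tauCtx enc c)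

lemma tau_fill (enc : Fm → Nat) (c : Ctx) (Δ : Str) :
    tauStr enc (c.fill Δ) = (tauCtx enc c).fill (tauStr enc Δ) := by
  induction c <;> simp [Ctx.fill, tauCtx, tauStr, *]

lemma fill_fms (c : Ctx) (Δ : Str) :
    (c.fill Δ).fms = (c.fill .emp).fms ∪ Δ.fms := by
  induction c with
  | hole => simp [Ctx.fill, Str.fms]
  | commaL c' Θ ih => ext x; simp [Ctx.fill, Str.fms, ih]; tauto
  | commaR Θ c' ih => ext x; simp [Ctx.fill, Str.fms, ih]; tauto

lemma mem_sub_self (A : Fm) : A ∈ A.sub := by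
  cases A <;> simp [Fm.sub]

lemma sub_trans : ∀ B A : Fm, A ∈ B.sub → A.sub ⊆ B.sub := by
  intro B
  induction B with
  | var i => intro A hA; simp [Fm.sub] at hA; subst hA; simp [Fm.sub]
  | one => intro A hA; simp [Fm.sub] at hA; subst hA; simp [Fm.sub]
  | bang B ih =>
      intro A hA
      rcases (Set.mem_insert_iff.1 hA) with h | h
      · subst h; exact subset_rfl
      · exact (ih A h).trans (Set.subset_insert _ _)
  | tens B1 B2 ih1 ih2 =>
      intro A hA
      rcases (Set.mem_insert_iff.1 hA) with h | h
      · subst h; exact subset_rfl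
      · rcases (Set.mem_union _ _ _).1 h with h | h
        · exact (ih1 A h).trans ((Set.subset_union_left).trans (Set.subset_insert _ _))
        · exact (ih2 A h).trans ((Set.subset_union_right).trans (Set.subset_insert _ _))
  | arr B1 B2 ih1 ih2 =>
      intro A hA
      rcases (Set.mem_insert_iff.1 hA) with h | h
      · subst h; exact subset_rfl
      · rcases (Set.mem_union _ _ _).1 h with h | h
        · exact (ih1 A h).trans ((Set.subset_union_left).trans (Set.subset_insert _ _))
        · exact (ih2 A h).trans ((Set.subset_union_right).trans (Set.subset_insert _ _))
  | larr B1 B2 ih1 ih2 =>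
      intro A hA
      rcases (Set.mem_insert_iff.1 hA) with h | h
      · subst h; exact subset_rfl
      · rcases (Set.mem_union _ _ _).1 h with h | h
        · exact (ih1 A h).trans ((Set.subset_union_left).trans (Set.subset_insert _ _))
        · exact (ih2 A h).trans ((Set.subset_union_right).trans (Set.subset_insert _ _))

/-- All formulas of a structure have their subformulas inside `X`. -/
def GoodS (X : Set Fm) (Δ : Str) : Prop := ∀ F ∈ Δ.fms, F.sub ⊆ X

lemma goodS_comma {X a b} : GoodS X (.comma a b) ↔ GoodS X a ∧ GoodS X b := by
  simp [GoodS, Str.fms, or_imp, forall_and]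

lemma goodS_leaf {X A} : GoodS X (.leaf A) ↔ A.sub ⊆ X := by
  simp [GoodS, Str.fms]

lemma goodS_emp {X} : GoodS X .emp := by simp [GoodS, Str.fms]

lemma goodS_fill {X : Set Fm} {c : Ctx} {Δ : Str} : GoodS X (c.fill Δ) ↔ GoodS X (c.fill .emp) ∧ GoodS X Δ := by
  constructor
  · intro h
    constructor
    · intro F hF; exact h F (by rw [fill_fms]; exact Set.mem_union_left _ hF)
    · intro F hF; exact h F (by rw [fill_fms]; exact Set.mem_union_right _ hF)
  · rintro ⟨h1, h2⟩ F hF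
    rw [fill_fms, Set.mem_union] at hF
    rcases hF with hF | hF
    · exact h1 F hF
    · exact h2 F hF

lemma der_mono {fl : Flags} {Ax Ax' : Set (Str × Fm)} (hs : Ax ⊆ Ax')
    {Γ : Str} {C : Fm} (h : Der fl Ax Γ C) : Der fl Ax' Γ C := by
  induction h with
  | ax h => exact .ax (hs h)
  | init A => exact .init A
  | tensL Γ _ ih => exact .tensL Γ ih
  | tensR _ _ ih1 ih2 => exact .tensR ih1 ih2
  | arrL Γ _ _ ih1 ih2 => exact .arrL Γ ih1 ih2
  | arrR _ ih => exact .arrR ih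
  | larrL Γ _ _ ih1 ih2 => exact .larrL Γ ih1 ih2
  | larrR _ ih => exact .larrR ih
  | oneL Γ _ ih => exact .oneL Γ ih
  | oneR => exact .oneR
  | bangL Γ hf _ ih => exact .bangL Γ hf ih
  | bangR hf _ ih => exact .bangR hf ih
  | bangRK hf _ ih => exact .bangRK hf ih
  | bangR4 hf _ ih => exact .bangR4 hf ih
  | bangRK4 hf hsb _ ih => exact .bangRK4 hf hsb ih
  | contr Γ hf _ ih => exact .contr Γ hf ih
  | contrK Γ hf hp _ ih => exact .contrK Γ hf hp ih
  | weak Γ hf _ ih => exact .weak Γ hf ih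
  | cut Γ hf _ _ ih1 ih2 => exact .cut Γ hf ih1 ih2

lemma phi_mono (enc : Fm → Nat) (X : Set Fm) {m n : Nat} (h : m ≤ n) :
    Phi enc X m ⊆ Phi enc X n := by
  induction n with
  | zero => simp only [Nat.le_zero] at h; subst h; exact subset_rfl
  | succ n ih =>
      rcases Nat.le_succ_iff.1 h with h | h
      · exact (ih h).trans (by exact Set.subset_union_left)
      · subst h; exact subset_rfl

lemma der_finAx {fl : Flags} (enc : Fm → Nat) (X : Set Fm) {Γ : Str} {C : Fm}
    (h : Der fl (⋃ n, Phi enc X n) Γ C) : ∃ n, Der fl (Phi enc X n) Γ C := by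
  induction h with
  | ax h =>
      obtain ⟨n, hn⟩ := Set.mem_iUnion.1 h
      exact ⟨n, .ax hn⟩
  | init A => exact ⟨0, .init A⟩
  | tensL Γ _ ih => obtain ⟨n, h⟩ := ih; exact ⟨n, .tensL Γ h⟩
  | tensR _ _ ih1 ih2 =>
      obtain ⟨n1, h1⟩ := ih1; obtain ⟨n2, h2⟩ := ih2
      exact ⟨max n1 n2, .tensR (der_mono (phi_mono enc X (le_max_left _ _)) h1)
        (der_mono (phi_mono enc X (le_max_right _ _)) h2)⟩
  | arrL Γ _ _ ih1 ih2 =>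
      obtain ⟨n1, h1⟩ := ih1; obtain ⟨n2, h2⟩ := ih2
      exact ⟨max n1 n2, .arrL Γ (der_mono (phi_mono enc X (le_max_left _ _)) h1)
        (der_mono (phi_mono enc X (le_max_right _ _)) h2)⟩
  | arrR _ ih => obtain ⟨n, h⟩ := ih; exact ⟨n, .arrR h⟩
  | larrL Γ _ _ ih1 ih2 =>
      obtain ⟨n1, h1⟩ := ih1; obtain ⟨n2, h2⟩ := ih2
      exact ⟨max n1 n2, .larrL Γ (der_mono (phi_mono enc X (le_max_left _ _)) h1)
        (der_mono (phi_mono enc X (le_max_right _ _)) h2)⟩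
  | larrR _ ih => obtain ⟨n, h⟩ := ih; exact ⟨n, .larrR h⟩
  | oneL Γ _ ih => obtain ⟨n, h⟩ := ih; exact ⟨n, .oneL Γ h⟩
  | oneR => exact ⟨0, .oneR⟩
  | bangL Γ hf _ ih => obtain ⟨n, h⟩ := ih; exact ⟨n, .bangL Γ hf h⟩
  | bangR hf _ ih => obtain ⟨n, h⟩ := ih; exact ⟨n, .bangR hf h⟩
  | bangRK hf _ ih => obtain ⟨n, h⟩ := ih; exact ⟨n, .bangRK hf h⟩
  | bangR4 hf _ ih => obtain ⟨n, h⟩ := ih; exact ⟨n, .bangR4 hf h⟩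
  | bangRK4 hf hsb _ ih => obtain ⟨n, h⟩ := ih; exact ⟨n, .bangRK4 hf hsb h⟩
  | contr Γ hf _ ih => obtain ⟨n, h⟩ := ih; exact ⟨n, .contr Γ hf h⟩
  | contrK Γ hf hp _ ih => obtain ⟨n, h⟩ := ih; exact ⟨n, .contrK Γ hf hp h⟩
  | weak Γ hf _ ih => obtain ⟨n, h⟩ := ih; exact ⟨n, .weak Γ hf h⟩
  | cut Γ hf _ _ ih1 ih2 =>
      obtain ⟨n1, h1⟩ := ih1; obtain ⟨n2, h2⟩ := ih2
      exact ⟨max n1 n2, .cut Γ hf (der_mono (phi_mono enc X (le_max_left _ _)) h1)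
        (der_mono (phi_mono enc X (le_max_right _ _)) h2)⟩

lemma phi_zero_subset (enc : Fm → Nat) (X : Set Fm) {s : Str × Fm}
    (hs : s ∈ Phi enc X 0) : s ∈ ⋃ n, Phi enc X n :=
  Set.mem_iUnion.2 ⟨0, hs⟩

lemma main_lemma (enc : Fm → Nat) (X : Set Fm) :
    ∀ {Γ : Str} {C : Fm}, Der sys10 ∅ Γ C → GoodS X Γ → C.sub ⊆ X →
    Der macllCut (⋃ n, Phi enc X n) (tauStr enc Γ) (tau enc C) := by
  intro Γ C h
  induction h with
  | ax h => exact absurd h (Set.notMem_empty _)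
  | init A => intro _ _; exact Der.init (tau enc A)
  | @tensL c A B C _ ih =>
      intro hΓ hC
      rw [goodS_fill, goodS_leaf] at hΓ
      obtain ⟨hc, hAB⟩ := hΓ
      have hA : A.sub ⊆ X := (sub_trans _ A (by simp [Fm.sub, mem_sub_self])).trans hAB
      have hB : B.sub ⊆ X := (sub_trans _ B (by simp [Fm.sub, mem_sub_self])).trans hAB
      have h1 := ih (goodS_fill.2 ⟨hc, goodS_comma.2 ⟨goodS_leaf.2 hA, goodS_leaf.2 hB⟩⟩) hC
      rw [tau_fill] at h1 ⊢
      exact Der.tensL (tauCtx enc c) h1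
  | @tensR Γ Δ A B _ _ ih1 ih2 =>
      intro hΓ hC
      rw [goodS_comma] at hΓ
      have hA : A.sub ⊆ X := (sub_trans _ A (by simp [Fm.sub, mem_sub_self])).trans hC
      have hB : B.sub ⊆ X := (sub_trans _ B (by simp [Fm.sub, mem_sub_self])).trans hC
      exact Der.tensR (ih1 hΓ.1 hA) (ih2 hΓ.2 hB)
  | @arrL c Δ A B C _ _ ih1 ih2 =>
      intro hΓ hC
      rw [goodS_fill, goodS_comma, goodS_leaf] at hΓ
      obtain ⟨hc, hΔ, hAB⟩ := hΓ
      have hA : A.sub ⊆ X := (sub_trans _ A (by simp [Fm.sub, mem_sub_self])).trans hAB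
      have hB : B.sub ⊆ X := (sub_trans _ B (by simp [Fm.sub, mem_sub_self])).trans hAB
      have h1 := ih1 hΔ hA
      have h2 := ih2 (goodS_fill.2 ⟨hc, goodS_leaf.2 hB⟩) hC
      rw [tau_fill] at h2 ⊢
      exact Der.arrL (tauCtx enc c) h1 h2
  | @arrR Γ A B _ ih =>
      intro hΓ hC
      have hA : A.sub ⊆ X := (sub_trans _ A (by simp [Fm.sub, mem_sub_self])).trans hC
      have hB : B.sub ⊆ X := (sub_trans _ B (by simp [Fm.sub, mem_sub_self])).trans hC
      exact Der.arrR (ih (goodS_comma.2 ⟨goodS_leaf.2 hA, hΓ⟩) hB)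
  | @larrL c Δ A B C _ _ ih1 ih2 =>
      intro hΓ hC
      rw [goodS_fill, goodS_comma, goodS_leaf] at hΓ
      obtain ⟨hc, hAB, hΔ⟩ := hΓ
      have hA : A.sub ⊆ X := (sub_trans _ A (by simp [Fm.sub, mem_sub_self])).trans hAB
      have hB : B.sub ⊆ X := (sub_trans _ B (by simp [Fm.sub, mem_sub_self])).trans hAB
      have h1 := ih1 hΔ hA
      have h2 := ih2 (goodS_fill.2 ⟨hc, goodS_leaf.2 hB⟩) hC
      rw [tau_fill] at h2 ⊢
      exact Der.larrL (tauCtx enc c) h1 h2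
  | @larrR Γ A B _ ih =>
      intro hΓ hC
      have hA : A.sub ⊆ X := (sub_trans _ A (by simp [Fm.sub, mem_sub_self])).trans hC
      have hB : B.sub ⊆ X := (sub_trans _ B (by simp [Fm.sub, mem_sub_self])).trans hC
      exact Der.larrR (ih (goodS_comma.2 ⟨hΓ, goodS_leaf.2 hA⟩) hB)
  | @oneL c C _ ih =>
      intro hΓ hC
      rw [goodS_fill] at hΓ
      have h1 := ih (goodS_fill.2 ⟨hΓ.1, goodS_emp⟩) hC
      rw [tau_fill] at h1 ⊢
      exact Der.oneL (tauCtx enc c) h1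
  | oneR => intro _ _; exact Der.oneR
  | @bangL c A C hf _ ih =>
      intro hΓ hC
      rw [goodS_fill, goodS_leaf] at hΓ
      obtain ⟨hc, hbA⟩ := hΓ
      have hA : A.sub ⊆ X := (sub_trans _ A (by simp [Fm.sub, mem_sub_self])).trans hbA
      have hmem : Fm.bang A ∈ X := hbA (mem_sub_self _)
      have h1 := ih (goodS_fill.2 ⟨hc, goodS_leaf.2 hA⟩) hC
      rw [tau_fill] at h1 ⊢
      have hax : Der macllCut (⋃ n, Phi enc X n)
          (.leaf (.var (2 * enc A))) (tau enc A) :=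
        Der.ax (phi_zero_subset enc X ⟨A, hmem, Or.inl rfl⟩)
      exact Der.cut (tauCtx enc c) rfl hax h1
  | @bangR A C hf _ ih =>
      intro hΓ hC
      rw [goodS_leaf] at hΓ
      have hmemA : Fm.bang A ∈ X := hΓ (mem_sub_self _)
      have hmemC : Fm.bang C ∈ X := hC (mem_sub_self _)
      have hA : A.sub ⊆ X :=
        (sub_trans (Fm.bang A) A (Set.mem_insert_of_mem _ (mem_sub_self _))).trans hΓ
      have hCs : C.sub ⊆ X :=
        (sub_trans (Fm.bang C) C (Set.mem_insert_of_mem _ (mem_sub_self _))).trans hC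
      have h1 := ih (goodS_leaf.2 hA) hCs
      obtain ⟨n, hn⟩ := der_finAx enc X h1
      refine Der.ax (Set.mem_iUnion.2 ⟨n + 1, Set.mem_union_right _ ?_⟩)
      exact ⟨A, C, hmemA, hmemC, rfl, hn⟩
  | bangRK hf _ _ => exact absurd hf (by decide)
  | bangR4 hf _ _ => exact absurd hf (by decide)
  | bangRK4 hf _ _ _ => exact absurd hf (by decide)
  | @contr c A C hf _ ih =>
      intro hΓ hC
      rw [goodS_fill, goodS_leaf] at hΓ
      obtain ⟨hc, hbA⟩ := hΓ
      have hmem : Fm.bang A ∈ X := hbA (mem_sub_self _)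
      have h1 := ih (goodS_fill.2 ⟨hc, goodS_comma.2 ⟨goodS_leaf.2 hbA, goodS_leaf.2 hbA⟩⟩) hC
      rw [tau_fill] at h1 ⊢
      have h2 := Der.tensL (A := .var (2 * enc A)) (B := .var (2 * enc A)) (tauCtx enc c) h1
      have hax : Der macllCut (⋃ n, Phi enc X n)
          (.leaf (.var (2 * enc A)))
          (.tens (.var (2 * enc A)) (.var (2 * enc A))) :=
        Der.ax (phi_zero_subset enc X ⟨A, hmem, Or.inr (Or.inl rfl)⟩)
      exact Der.cut (tauCtx enc c) rfl hax h2
  | contrK _ hf _ _ _ => exact absurd hf (by decide)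
  | @weak c A C hf _ ih =>
      intro hΓ hC
      rw [goodS_fill, goodS_leaf] at hΓ
      obtain ⟨hc, hbA⟩ := hΓ
      have hmem : Fm.bang A ∈ X := hbA (mem_sub_self _)
      have h1 := ih (goodS_fill.2 ⟨hc, goodS_emp⟩) hC
      rw [tau_fill] at h1 ⊢
      have h2 := Der.oneL (tauCtx enc c) h1
      have hax : Der macllCut (⋃ n, Phi enc X n)
          (.leaf (.var (2 * enc A))) Fm.one :=
        Der.ax (phi_zero_subset enc X ⟨A, hmem, Or.inr (Or.inr rfl)⟩)
      exact Der.cut (tauCtx enc c) rfl hax h2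
  | cut _ hf _ _ _ _ => exact absurd hf (by decide)

/-- Completeness of the translation: if Γ ⇒ C is derivable in !_{t}^{c,w}MacLL,
then τ(Γ) ⇒ τ(C) is derivable in MacLL + Φ^{Γ,C}_∞ + cut, where the axioms are
built from the set of all subformulas of the endsequent. -/
theorem stmt10 (enc : Fm → Nat) (henc : Function.Injective enc)
    (Γ : Str) (C : Fm) (h : Der sys10 ∅ Γ C) :
    Der macllCut (⋃ n, Phi enc (⋃ F ∈ insert C Γ.fms, F.sub) n)
      (tauStr enc Γ) (tau enc C) := by
  exact main_lemma enc _ h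
    (fun F hF x hx => Set.mem_biUnion (Set.mem_insert_of_mem _ hF) hx)
    (fun x hx => Set.mem_biUnion (Set.mem_insert _ _) hx)
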